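/- Let D = pdiag(d_1,…,d_n) be a pseudo-diagonal matrix with d_1 ≤ … ≤ d_n and n ≥ 2. If n = 2 and d_2 < 0, then attr(D) = {x ∈ (ℝ∪{−∞})^2 : x_1 = x_2}, and in particular D is not strongly stable. In all other cases (n ≥ 3, or n = 2 with d_2 ≥ 0), D is strongly stable, i.e., attr(D) = (ℝ∪{−∞})^n. -/

import Mathlib

open Finset

/-- Max-plus product of a real matrix with a vector over `ℝ ∪ {−∞}` (modelled as
`WithBot ℝ`, where `⊥ = −∞` is absorbing under addition):
`(A ⊗ x) i = max_j (A i j + x j)`. -/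
noncomputable def mpMulVec {n : ℕ} [NeZero n] (A : Fin n → Fin n → ℝ)
    (x : Fin n → WithBot ℝ) : Fin n → WithBot ℝ :=
  fun i => univ.sup' univ_nonempty fun j => (A i j : WithBot ℝ) + x j

/-- `V(A)`: the set consisting of the all-`−∞` vector together with all eigenvectors of `A`,
i.e. vectors `x ≠ ε` with `A ⊗ x = λ ⊗ x` for some `λ ∈ ℝ ∪ {−∞}`. -/
noncomputable def eigenSet {n : ℕ} [NeZero n] (A : Fin n → Fin n → ℝ) :
    Set (Fin n → WithBot ℝ) :=
  {x | x = (fun _ => ⊥) ∨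
    (x ≠ (fun _ => ⊥) ∧ ∃ l : WithBot ℝ, ∀ i, mpMulVec A x i = l + x i)}

/-- `attr(A)`: vectors `x` such that `A^k ⊗ x ∈ V(A)` for some integer `k ≥ 0`. -/
noncomputable def attrSet {n : ℕ} [NeZero n] (A : Fin n → Fin n → ℝ) :
    Set (Fin n → WithBot ℝ) :=
  {x | ∃ k : ℕ, (mpMulVec A)^[k] x ∈ eigenSet A}

namespace MPAux

set_option linter.unusedSectionVars false

variable {n : ℕ} [NeZero n]

noncomputable def G (d : Fin n → ℝ) (x : Fin n → ℝ) : Fin n → ℝ :=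
  fun i => univ.sup' univ_nonempty fun j => (if i = j then d i else 0) + x j

noncomputable def M (x : Fin n → ℝ) : ℝ := univ.sup' univ_nonempty x

lemma le_M (x : Fin n → ℝ) (j : Fin n) : x j ≤ M x := le_sup' _ (mem_univ j)

lemma M_le {x : Fin n → ℝ} {c : ℝ} (h : ∀ j, x j ≤ c) : M x ≤ c :=
  sup'_le _ _ fun j _ => h j

lemma exists_M (x : Fin n → ℝ) : ∃ j, x j = M x := by
  obtain ⟨j, -, hj⟩ := exists_mem_eq_sup' (univ_nonempty) x
  exact ⟨j, hj.symm⟩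

lemma G_ge_self (d x : Fin n → ℝ) (i : Fin n) : d i + x i ≤ G d x i := by
  simp only [G]
  have h := le_sup' (fun j => (if i = j then d i else 0) + x j) (mem_univ i)
  simpa only [if_pos rfl, ite_true] using h

lemma G_ge_other (d x : Fin n → ℝ) {i j : Fin n} (h : i ≠ j) : x j ≤ G d x i := by
  simp only [G]
  have h2 := le_sup' (fun j => (if i = j then d i else 0) + x j) (mem_univ j)
  simpa only [if_neg h, zero_add] using h2

lemma G_le (d x : Fin n → ℝ) (i : Fin n) : G d x i ≤ max (d i + x i) (M x) := by
  apply sup'_le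
  intro j _
  by_cases h : i = j
  · subst h; simp
  · simp only [if_neg h, zero_add]
    exact le_max_of_le_right (le_M x j)

lemma exists_ne (hn : 2 ≤ n) (i : Fin n) : ∃ j : Fin n, j ≠ i :=
  Fintype.exists_ne_of_one_lt_card (by simp; omega) i

lemma exists_ne_ne (hn : 3 ≤ n) (i j : Fin n) : ∃ k : Fin n, k ≠ i ∧ k ≠ j := by
  by_contra h
  push_neg at h
  have hsub : (univ : Finset (Fin n)) ⊆ {i, j} := by
    intro k _
    by_cases h1 : k = i
    · simp [h1]
    · simp [h k h1]
  have h1 := card_le_card hsub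
  have h2 : ({i, j} : Finset (Fin n)).card ≤ 2 :=
    (card_insert_le _ _).trans (by simp)
  simp [card_univ] at h1
  omega


section CaseA

variable {d : Fin n → ℝ}

lemma G_le_M (hd : ∀ i, d i ≤ 0) (x : Fin n → ℝ) (i : Fin n) : G d x i ≤ M x := by
  refine (G_le d x i).trans (max_le ?_ le_rfl)
  have h1 := le_M x i
  have h2 := hd i
  linarith

lemma G_eq_M_of (hd : ∀ i, d i ≤ 0) (x : Fin n → ℝ) {j : Fin n}
    (h : ∃ i, i ≠ j ∧ x i = M x) : G d x j = M x := by
  obtain ⟨i, hij, hi⟩ := h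
  refine le_antisymm (G_le_M hd x j) ?_
  calc M x = x i := hi.symm
    _ ≤ G d x j := G_ge_other d x (Ne.symm hij)

lemma G_eq_M_top {t : Fin n} (hdt : d t = 0) (x : Fin n → ℝ) : G d x t = M x := by
  refine le_antisymm ?_ ?_
  · apply sup'_le
    intro j _
    by_cases h : t = j
    · subst h
      simpa [hdt] using le_M x t
    · simp only [if_neg h, zero_add]
      exact le_M x j
  · obtain ⟨j₀, hj₀⟩ := exists_M x
    by_cases h : j₀ = t
    · subst h
      have := G_ge_self d x j₀
      rw [hdt, zero_add] at this
      exact hj₀ ▸ this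
    · exact hj₀ ▸ G_ge_other d x (Ne.symm h)

lemma M_const (c : ℝ) : M (fun _ : Fin n => c) = c :=
  le_antisymm (M_le fun _ => le_rfl) (by simpa using le_M (fun _ : Fin n => c) (0 : Fin n))

lemma G_const (hn : 2 ≤ n) (hd : ∀ i, d i ≤ 0) (c : ℝ) (i : Fin n) :
    G d (fun _ => c) i = c := by
  refine le_antisymm ((G_le d _ i).trans (max_le (by have := hd i; linarith) ?_)) ?_
  · exact le_of_eq (M_const c)
  · obtain ⟨j, hj⟩ := exists_ne hn i
    exact G_ge_other d (fun _ => c) (Ne.symm hj)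

lemma caseA (hn : 2 ≤ n) (t : Fin n) (ht : ∀ j, d j ≤ d t) (hneg : d t ≤ 0)
    (hcase : 3 ≤ n ∨ d t = 0) (x : Fin n → ℝ) :
    G d (G d x) = fun _ => M x := by
  have hd : ∀ i, d i ≤ 0 := fun i => (ht i).trans hneg
  obtain ⟨i₀, hi₀⟩ := exists_M x
  have h2 : ∃ i, G d x i = M x := by
    rcases hcase with h3 | h0
    · obtain ⟨j, hj⟩ := exists_ne hn i₀
      exact ⟨j, G_eq_M_of hd x ⟨i₀, Ne.symm hj, hi₀⟩⟩
    · exact ⟨t, G_eq_M_top h0 x⟩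
  have hM : M (G d x) = M x :=
    le_antisymm (M_le (G_le_M hd x)) (h2.elim fun i hi => hi ▸ le_M _ i)
  funext j
  rcases hcase with h3 | h0
  · obtain ⟨k, hk1, hk2⟩ := exists_ne_ne h3 j i₀
    have hGk : G d x k = M x := G_eq_M_of hd x ⟨i₀, Ne.symm hk2, hi₀⟩
    exact (G_eq_M_of hd (G d x) ⟨k, hk1, hGk.trans hM.symm⟩).trans hM
  · by_cases hjt : j = t
    · subst hjt
      exact (G_eq_M_top h0 (G d x)).trans hM
    · exact (G_eq_M_of hd (G d x)
        ⟨t, fun he => hjt he.symm, (G_eq_M_top h0 x).trans hM.symm⟩).trans hM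

end CaseA


section CaseB

variable {d : Fin n → ℝ} {t : Fin n}

/-- invariant: the max is attained at an index with top diagonal entry -/
def Itop (d : Fin n → ℝ) (t : Fin n) (x : Fin n → ℝ) : Prop :=
  ∃ i, d i = d t ∧ x i = M x

lemma G_formula (hpos : 0 < d t) {x : Fin n → ℝ} (hI : Itop d t x) (j : Fin n) :
    G d x j = max (d j + x j) (M x) := by
  refine le_antisymm (G_le d x j) (max_le (G_ge_self d x j) ?_)
  obtain ⟨i, hdi, hxi⟩ := hI
  by_cases hij : i = j
  · subst hij
    have h1 := G_ge_self d x i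
    rw [hdi, hxi] at h1
    linarith
  · exact hxi ▸ G_ge_other d x (Ne.symm hij)

lemma M_G_eq (ht : ∀ j, d j ≤ d t) (hpos : 0 < d t) {x : Fin n → ℝ} (hI : Itop d t x) :
    M (G d x) = d t + M x ∧ Itop d t (G d x) := by
  obtain ⟨i, hdi, hxi⟩ := hI
  have hub : ∀ j, G d x j ≤ d t + M x := by
    intro j
    rw [G_formula hpos ⟨i, hdi, hxi⟩ j]
    exact max_le (add_le_add (ht j) (le_M x j)) (by linarith)
  have hwit : G d x i = d t + M x := by
    rw [G_formula hpos ⟨i, hdi, hxi⟩ i, hdi, hxi]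
    exact max_eq_left (by linarith)
  have hM : M (G d x) = d t + M x :=
    le_antisymm (M_le hub) (hwit ▸ le_M (G d x) i)
  exact ⟨hM, ⟨i, hdi, hwit.trans hM.symm⟩⟩

lemma max_eq_sub_min (a b c : ℝ) : max a b = c - min (c - a) (c - b) := by
  rcases le_total a b with h | h
  · rw [max_eq_right h, min_eq_right (by linarith)]; ring
  · rw [max_eq_left h, min_eq_left (by linarith)]; ring

lemma iterG (ht : ∀ j, d j ≤ d t) (hpos : 0 < d t) {x : Fin n → ℝ} (hI : Itop d t x)
    (m : ℕ) :
    M ((G d)^[m+1] x) = (m+1 : ℝ) * d t + M x ∧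
    Itop d t ((G d)^[m+1] x) ∧
    ∀ j, (G d)^[m+1] x j =
      ((m+1 : ℝ) * d t + M x) - min ((M x - x j) + (m+1 : ℝ) * (d t - d j)) (d t) := by
  induction m with
  | zero =>
    obtain ⟨hM, hI'⟩ := M_G_eq ht hpos hI
    refine ⟨by simpa using hM, by simpa using hI', ?_⟩
    intro j
    show G d x j = _
    rw [G_formula hpos hI j]
    push_cast
    rw [max_eq_sub_min (d j + x j) (M x) (d t + M x)]
    have e1 : d t + M x - (d j + x j) = (M x - x j) + ((0:ℝ) + 1) * (d t - d j) := by ring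
    have e2 : d t + M x - M x = d t := by ring
    rw [e1, e2]
    ring
  | succ m ih =>
    obtain ⟨hM, hI', hF⟩ := ih
    set y := (G d)^[m+1] x with hy
    obtain ⟨hM2, hI2⟩ := M_G_eq ht hpos hI'
    have hit : (G d)^[m+1+1] x = G d y := by
      rw [Function.iterate_succ_apply']
    refine ⟨?_, ?_, ?_⟩
    · rw [hit, hM2, hM]; push_cast; ring
    · rw [hit]; exact hI2
    · intro j
      rw [hit, G_formula hpos hI' j, hF j, hM]
      push_cast
      have hc : 0 ≤ d t - d j := by linarith [ht j]
      have ha : 0 ≤ M x - x j := by linarith [le_M x j]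
      set K := (m : ℝ) + 1 with hK
      have hqp : M x - x j + (K + 1) * (d t - d j) =
          (M x - x j + K * (d t - d j)) + (d t - d j) := by ring
      rw [hqp]
      set p := M x - x j + K * (d t - d j) with hpdef
      rcases le_total p (d t) with h1 | h1
      · rcases le_total (p + (d t - d j)) (d t) with h2 | h2
        · rw [min_eq_left h1, min_eq_left h2, max_eq_left (by linarith)]
          ring
        · rw [min_eq_left h1, min_eq_right h2, max_eq_right (by linarith)]
          ring
      · rw [min_eq_right h1, min_eq_right (by linarith : d t ≤ p + (d t - d j)),
          max_eq_right (by linarith)]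
        ring


lemma phase1 (ht : ∀ j, d j ≤ d t) (hpos : 0 < d t) (x : Fin n → ℝ) :
    ∃ k, Itop d t ((G d)^[k] x) := by
  by_cases hall : ∀ j, d j = d t
  · obtain ⟨i, hi⟩ := exists_M x
    exact ⟨0, ⟨i, hall i, hi⟩⟩
  · push_neg at hall
    set T : Finset (Fin n) := univ.filter (fun j => d j = d t) with hTdef
    have hT : T.Nonempty := ⟨t, by simp [hTdef]⟩
    set Tc : Finset (Fin n) := univ.filter (fun j => d j ≠ d t) with hTcdef
    have hTc : Tc.Nonempty := by
      obtain ⟨j, hj⟩ := hall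
      exact ⟨j, by simp [hTcdef, hj]⟩
    set d' := Tc.sup' hTc d with hd'def
    have hd' : d' < d t := by
      rw [hd'def, Finset.sup'_lt_iff]
      intro j hj
      have hjne : d j ≠ d t := by simpa [hTcdef] using hj
      exact (ht j).lt_of_ne hjne
    set δ := min (d t - d') (d t) with hδdef
    have hδ : 0 < δ := lt_min (by linarith) hpos
    set P : (Fin n → ℝ) → ℝ := fun y => T.sup' hT y with hPdef
    have hPM : ∀ y : Fin n → ℝ, P y ≤ M y := fun y => sup'_le _ _ fun i _ => le_M y i
    have key : ∀ y : Fin n → ℝ, M (G d y) - P (G d y) ≤ max 0 (M y - P y - δ) := by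
      intro y
      obtain ⟨i₁, hi₁T, hi₁⟩ := exists_mem_eq_sup' hT y
      have hdi₁ : d i₁ = d t := by simpa [hTdef] using hi₁T
      have h1 : d t + P y ≤ P (G d y) := by
        have := G_ge_self d y i₁
        rw [hdi₁] at this
        calc d t + P y = d t + y i₁ := by simp only [hPdef]; rw [hi₁]
          _ ≤ G d y i₁ := this
          _ ≤ P (G d y) := by simp only [hPdef]; exact le_sup' _ hi₁T
      have h2 : ∀ j, G d y j ≤ max (d t + P y) (max (d' + M y) (M y)) := by
        intro j
        refine (G_le d y j).trans (max_le ?_ (le_max_of_le_right (le_max_right _ _)))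
        by_cases hj : d j = d t
        · have hjT : j ∈ T := by simp [hTdef, hj]
          have hyP : y j ≤ P y := by simp only [hPdef]; exact le_sup' y hjT
          refine le_max_of_le_left ?_
          rw [hj]
          linarith
        · have hjTc : j ∈ Tc := by simp [hTcdef, hj]
          have hdj : d j ≤ d' := le_sup' _ hjTc
          refine le_max_of_le_right (le_max_of_le_left ?_)
          linarith [le_M y j]
      have h3 : M (G d y) ≤ max (d t + P y) (max (d' + M y) (M y)) := M_le h2
      have h4 : 0 ≤ max 0 (M y - P y - δ) := le_max_left _ _
      have h5 : M y - P y - δ ≤ max 0 (M y - P y - δ) := le_max_right _ _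
      have hmle : max (d t + P y) (max (d' + M y) (M y)) ≤
          (d t + P y) + max 0 (M y - P y - δ) := by
        refine max_le (by linarith) (max_le ?_ ?_)
        · have : d' + M y ≤ (d t + P y) + (M y - P y - δ) := by
            have : δ ≤ d t - d' := min_le_left _ _
            linarith
          linarith
        · have : M y ≤ (d t + P y) + (M y - P y - δ) := by
            have : δ ≤ d t := min_le_right _ _
            linarith
          linarith
      linarith [h3.trans hmle]
    have iter : ∀ m : ℕ, M ((G d)^[m] x) - P ((G d)^[m] x) ≤
        max 0 (M x - P x - m * δ) := by
      intro m
      induction m with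
      | zero => simp
      | succ m ih =>
        rw [Function.iterate_succ_apply']
        refine (key ((G d)^[m] x)).trans ?_
        refine max_le (le_max_left _ _) ?_
        rcases le_total (M x - P x - m * δ) 0 with h | h
        · have : M ((G d)^[m] x) - P ((G d)^[m] x) ≤ 0 := ih.trans (by simp [h])
          refine le_trans ?_ (le_max_left _ _)
          linarith
        · have h2 : M ((G d)^[m] x) - P ((G d)^[m] x) ≤ M x - P x - m * δ :=
            ih.trans (by simp [h])
          refine le_trans ?_ (le_max_right _ _)
          push_cast
          linarith
    obtain ⟨k, hk⟩ := Archimedean.arch (M x - P x) hδ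
    rw [nsmul_eq_mul] at hk
    refine ⟨k, ?_⟩
    set z := (G d)^[k] x with hz
    have h0 : M z - P z ≤ 0 := (iter k).trans (by
      apply max_le le_rfl
      linarith)
    have hPz : P z = M z := le_antisymm (hPM z) (by linarith)
    obtain ⟨i₂, hi₂T, hi₂⟩ := exists_mem_eq_sup' hT z
    refine ⟨i₂, by simpa [hTdef] using hi₂T, ?_⟩
    rw [← hPz]
    simp only [hPdef]
    exact hi₂.symm

lemma shape_eigen (ht : ∀ j, d j ≤ d t) (hpos : 0 < d t) (v : Fin n → ℝ)
    (h1 : ∃ i, d i = d t ∧ v i = M v)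
    (h2 : ∀ j, d j ≠ d t → v j = M v - d t)
    (h3 : ∀ j, M v - d t ≤ v j) (j : Fin n) : G d v j = d t + v j := by
  refine le_antisymm ((G_le d v j).trans (max_le ?_ ?_)) ?_
  · exact add_le_add_left (ht j) _
  · linarith [h3 j]
  · by_cases hj : d j = d t
    · exact hj ▸ G_ge_self d v j
    · obtain ⟨i, hdi, hvi⟩ := h1
      have hij : i ≠ j := fun he => hj (he ▸ hdi)
      calc d t + v j = M v := by rw [h2 j hj]; ring
        _ = v i := hvi.symm
        _ ≤ G d v j := G_ge_other d v (Ne.symm hij)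

lemma caseB (ht : ∀ j, d j ≤ d t) (hpos : 0 < d t) (x : Fin n → ℝ) :
    ∃ k, ∀ i, G d ((G d)^[k] x) i = d t + (G d)^[k] x i := by
  obtain ⟨k₁, hI1⟩ := phase1 ht hpos x
  set y := (G d)^[k₁] x with hy
  have harch : ∀ j : Fin n, ∃ m : ℕ, d j ≠ d t → d t ≤ ((m:ℝ)+1) * (d t - d j) := by
    intro j
    by_cases h : d j = d t
    · exact ⟨0, fun hc => absurd h hc⟩
    · have hc : 0 < d t - d j := by linarith [(ht j).lt_of_ne h]
      obtain ⟨m, hm⟩ := Archimedean.arch (d t) hc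
      rw [nsmul_eq_mul] at hm
      refine ⟨m, fun _ => hm.trans ?_⟩
      nlinarith
  choose f hf using harch
  set m := univ.sup f with hm
  have hmf : ∀ j, d j ≠ d t → d t ≤ ((m:ℝ)+1) * (d t - d j) := by
    intro j hj
    refine (hf j hj).trans ?_
    have h1 : f j ≤ m := le_sup (mem_univ j)
    have h2 : ((f j : ℝ)) ≤ (m : ℝ) := by exact_mod_cast h1
    have h3 : 0 ≤ d t - d j := by linarith [ht j]
    nlinarith
  obtain ⟨hMv, hIv, hFv⟩ := iterG ht hpos hI1 m
  set v := (G d)^[m+1] y with hv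
  have h3 : ∀ j, M v - d t ≤ v j := by
    intro j
    rw [hFv j, hMv]
    have : min ((M y - y j) + ((m:ℝ)+1) * (d t - d j)) (d t) ≤ d t := min_le_right _ _
    linarith
  have h2 : ∀ j, d j ≠ d t → v j = M v - d t := by
    intro j hj
    rw [hFv j, hMv]
    have hge : d t ≤ (M y - y j) + ((m:ℝ)+1) * (d t - d j) := by
      have := hmf j hj
      have := le_M y j
      linarith
    rw [min_eq_right hge]
  have h1 : ∃ i, d i = d t ∧ v i = M v := by
    obtain ⟨i, hdi, hyi⟩ := hI1
    refine ⟨i, hdi, ?_⟩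
    rw [hFv i, hMv, hyi, hdi]
    simp [min_eq_left hpos.le]
  refine ⟨m + 1 + k₁, ?_⟩
  have hiter : (G d)^[m + 1 + k₁] x = v := by
    rw [hv, hy, ← Function.iterate_add_apply]
  rw [hiter]
  exact shape_eigen ht hpos v h1 h2 h3

lemma real_main (hn : 2 ≤ n) (ht : ∀ j, d j ≤ d t) (hcase : 3 ≤ n ∨ 0 ≤ d t)
    (x : Fin n → ℝ) :
    ∃ k : ℕ, ∃ l : ℝ, ∀ i, G d ((G d)^[k] x) i = l + (G d)^[k] x i := by
  rcases lt_or_ge 0 (d t) with hpos | hneg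
  · obtain ⟨k, hk⟩ := caseB ht hpos x
    exact ⟨k, d t, hk⟩
  · have hcase' : 3 ≤ n ∨ d t = 0 := by
      rcases hcase with h | h
      · exact Or.inl h
      · exact Or.inr (le_antisymm hneg h)
    refine ⟨2, 0, ?_⟩
    have h2 : (G d)^[2] x = fun _ => M x := by
      show G d (G d x) = _
      exact caseA hn t ht hneg hcase' x
    rw [h2]
    intro i
    rw [G_const hn (fun i => (ht i).trans hneg) (M x) i]
    simp

end CaseB


section Glue

variable {d : Fin n → ℝ} {D : Fin n → Fin n → ℝ}

lemma coe_G (hD : ∀ i j, D i j = if i = j then d i else 0) (x : Fin n → ℝ) :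
    mpMulVec D (fun j => (x j : WithBot ℝ)) = fun i => ((G d x i : ℝ) : WithBot ℝ) := by
  funext i
  have h1 : mpMulVec D (fun j => (x j : WithBot ℝ)) i =
      univ.sup' univ_nonempty
        (fun j => (((if i = j then d i else 0) + x j : ℝ) : WithBot ℝ)) := by
    simp only [mpMulVec]
    congr 1
    funext j
    rw [hD i j, WithBot.coe_add]
  rw [h1, Finset.sup'_eq_sup]
  exact (Finset.coe_sup' univ_nonempty _).symm

lemma iterate_coe (hD : ∀ i j, D i j = if i = j then d i else 0) (x : Fin n → ℝ)
    (k : ℕ) :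
    (mpMulVec D)^[k] (fun j => (x j : WithBot ℝ)) =
      fun j => ((((G d)^[k] x) j : ℝ) : WithBot ℝ) := by
  induction k generalizing x with
  | zero => rfl
  | succ k ih =>
    rw [Function.iterate_succ_apply, Function.iterate_succ_apply, coe_G hD x,
      ih (G d x)]

lemma eigen_of_real (hD : ∀ i j, D i j = if i = j then d i else 0)
    (v : Fin n → ℝ) (l : ℝ) (h : ∀ i, G d v i = l + v i) :
    (fun i => ((v i : ℝ) : WithBot ℝ)) ∈ eigenSet D := by
  refine Or.inr ⟨?_, ⟨(l : WithBot ℝ), fun i => ?_⟩⟩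
  · intro hbot
    have := congrFun hbot ⟨0, Nat.pos_of_ne_zero (NeZero.ne n)⟩
    exact WithBot.coe_ne_bot this
  · rw [congrFun (coe_G hD v) i, h i, WithBot.coe_add]

lemma step_real (hD : ∀ i j, D i j = if i = j then d i else 0)
    {x : Fin n → WithBot ℝ} (hx : x ≠ fun _ => ⊥) :
    ∃ y : Fin n → ℝ, mpMulVec D x = fun i => ((y i : ℝ) : WithBot ℝ) := by
  have hj : ∃ j, x j ≠ ⊥ := by
    by_contra h
    push_neg at h
    exact hx (funext fun j => h j)
  obtain ⟨j₀, hj₀⟩ := hj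
  obtain ⟨a, ha⟩ := WithBot.ne_bot_iff_exists.mp hj₀
  have hne : ∀ i, mpMulVec D x i ≠ ⊥ := by
    intro i hbot
    have hle : (fun j => (D i j : WithBot ℝ) + x j) j₀ ≤
        univ.sup' univ_nonempty (fun j => (D i j : WithBot ℝ) + x j) :=
      le_sup' (fun j => (D i j : WithBot ℝ) + x j) (mem_univ j₀)
    rw [show univ.sup' univ_nonempty (fun j => (D i j : WithBot ℝ) + x j) =
        mpMulVec D x i from rfl] at hle
    rw [hbot, le_bot_iff] at hle
    simp [← ha] at hle
  choose y hy using fun i => WithBot.ne_bot_iff_exists.mp (hne i)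
  exact ⟨y, funext fun i => (hy i).symm⟩

end Glue


section Neg

variable {d : Fin 2 → ℝ} {D : Fin 2 → Fin 2 → ℝ}

lemma mp_two (D : Fin 2 → Fin 2 → ℝ) (x : Fin 2 → WithBot ℝ) (i : Fin 2) :
    mpMulVec D x i = ((D i 0 : WithBot ℝ) + x 0) ⊔ ((D i 1 : WithBot ℝ) + x 1) := by
  refine le_antisymm (sup'_le _ _ ?_)
    (sup_le (le_sup' (fun j => (D i j : WithBot ℝ) + x j) (mem_univ 0))
      (le_sup' (fun j => (D i j : WithBot ℝ) + x j) (mem_univ 1)))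
  intro j _
  fin_cases j
  · exact le_sup_left
  · exact le_sup_right

lemma comp01 (hD : ∀ i j, D i j = if i = j then d i else 0)
    (h0 : d 0 < 0) (h1 : d 1 < 0) {y : Fin 2 → WithBot ℝ} (hy : y 0 < y 1) :
    mpMulVec D y 0 = y 1 ∧ mpMulVec D y 1 < y 1 := by
  obtain ⟨b, hb⟩ := WithBot.ne_bot_iff_exists.mp (bot_le.trans_lt hy).ne'
  have hd00 : D 0 0 = d 0 := by rw [hD]; simp
  have hd01 : D 0 1 = 0 := by rw [hD]; simp
  have hd10 : D 1 0 = 0 := by rw [hD]; simp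
  have hd11 : D 1 1 = d 1 := by rw [hD]; simp
  constructor
  · rw [mp_two, hd00, hd01, WithBot.coe_zero, zero_add]
    refine sup_eq_right.mpr ?_
    calc (↑(d 0) : WithBot ℝ) + y 0 ≤ 0 + y 0 := by
          refine add_le_add_left ?_ _
          exact_mod_cast h0.le
      _ = y 0 := zero_add _
      _ ≤ y 1 := hy.le
  · rw [mp_two, hd10, hd11, WithBot.coe_zero, zero_add]
    refine sup_lt_iff.mpr ⟨hy, ?_⟩
    rw [← hb, ← WithBot.coe_add]
    exact_mod_cast (by linarith : d 1 + b < b)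

lemma comp10 (hD : ∀ i j, D i j = if i = j then d i else 0)
    (h0 : d 0 < 0) (h1 : d 1 < 0) {y : Fin 2 → WithBot ℝ} (hy : y 1 < y 0) :
    mpMulVec D y 1 = y 0 ∧ mpMulVec D y 0 < y 0 := by
  obtain ⟨b, hb⟩ := WithBot.ne_bot_iff_exists.mp (bot_le.trans_lt hy).ne'
  have hd00 : D 0 0 = d 0 := by rw [hD]; simp
  have hd01 : D 0 1 = 0 := by rw [hD]; simp
  have hd10 : D 1 0 = 0 := by rw [hD]; simp
  have hd11 : D 1 1 = d 1 := by rw [hD]; simp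
  constructor
  · rw [mp_two, hd10, hd11, WithBot.coe_zero, zero_add]
    refine sup_eq_left.mpr ?_
    calc (↑(d 1) : WithBot ℝ) + y 1 ≤ 0 + y 1 := by
          refine add_le_add_left ?_ _
          exact_mod_cast h1.le
      _ = y 1 := zero_add _
      _ ≤ y 0 := hy.le
  · rw [mp_two, hd00, hd01, WithBot.coe_zero, zero_add]
    refine sup_lt_iff.mpr ⟨?_, hy⟩
    rw [← hb, ← WithBot.coe_add]
    exact_mod_cast (by linarith : d 0 + b < b)

lemma neg_preserve (hD : ∀ i j, D i j = if i = j then d i else 0)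
    (h0 : d 0 < 0) (h1 : d 1 < 0) {y : Fin 2 → WithBot ℝ} (hy : y 0 ≠ y 1) :
    mpMulVec D y 0 ≠ mpMulVec D y 1 := by
  rcases hy.lt_or_gt with h | h
  · obtain ⟨he, hl⟩ := comp01 hD h0 h1 h
    rw [he]
    exact hl.ne'
  · obtain ⟨he, hl⟩ := comp10 hD h0 h1 h
    rw [he]
    exact hl.ne

lemma neg_not_eigen (hD : ∀ i j, D i j = if i = j then d i else 0)
    (h0 : d 0 < 0) (h1 : d 1 < 0) {y : Fin 2 → WithBot ℝ} (hy : y 0 ≠ y 1) :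
    y ∉ eigenSet D := by
  intro hmem
  rcases hmem with hbot | ⟨-, l, hl⟩
  · exact hy (by rw [congrFun hbot 0, congrFun hbot 1])
  rcases hy.lt_or_gt with h | h
  · obtain ⟨he, hlt⟩ := comp01 hD h0 h1 h
    obtain ⟨b, hb⟩ := WithBot.ne_bot_iff_exists.mp (bot_le.trans_lt h).ne'
    have h0' := hl 0
    rw [he] at h0'
    -- h0' : y 1 = l + y 0
    have hlb : l ≠ ⊥ := by
      intro hc
      rw [hc, WithBot.bot_add] at h0'
      exact (bot_le.trans_lt h).ne' h0'
    have hyb : y 0 ≠ ⊥ := by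
      intro hc
      rw [hc, WithBot.add_bot] at h0'
      exact (bot_le.trans_lt h).ne' h0'
    obtain ⟨c, hc⟩ := WithBot.ne_bot_iff_exists.mp hlb
    obtain ⟨a, ha⟩ := WithBot.ne_bot_iff_exists.mp hyb
    rw [← hb, ← hc, ← ha, ← WithBot.coe_add, WithBot.coe_eq_coe] at h0'
    have hab : a < b := by
      rw [← ha, ← hb, WithBot.coe_lt_coe] at h
      exact h
    have hcpos : 0 < c := by linarith
    have h1' := hl 1
    rw [← hb, ← hc, ← WithBot.coe_add] at h1'
    rw [← hb] at hlt
    rw [h1', WithBot.coe_lt_coe] at hlt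
    linarith
  · obtain ⟨he, hlt⟩ := comp10 hD h0 h1 h
    obtain ⟨b, hb⟩ := WithBot.ne_bot_iff_exists.mp (bot_le.trans_lt h).ne'
    have h1' := hl 1
    rw [he] at h1'
    have hlb : l ≠ ⊥ := by
      intro hc
      rw [hc, WithBot.bot_add] at h1'
      exact (bot_le.trans_lt h).ne' h1'
    have hyb : y 1 ≠ ⊥ := by
      intro hc
      rw [hc, WithBot.add_bot] at h1'
      exact (bot_le.trans_lt h).ne' h1'
    obtain ⟨c, hc⟩ := WithBot.ne_bot_iff_exists.mp hlb
    obtain ⟨a, ha⟩ := WithBot.ne_bot_iff_exists.mp hyb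
    rw [← hb, ← hc, ← ha, ← WithBot.coe_add, WithBot.coe_eq_coe] at h1'
    have hab : a < b := by
      rw [← ha, ← hb, WithBot.coe_lt_coe] at h
      exact h
    have hcpos : 0 < c := by linarith
    have h0' := hl 0
    rw [← hb, ← hc, ← WithBot.coe_add] at h0'
    rw [← hb] at hlt
    rw [h0', WithBot.coe_lt_coe] at hlt
    linarith

lemma const_mem_attr (hD : ∀ i j, D i j = if i = j then d i else 0)
    (h0 : d 0 < 0) (h1 : d 1 < 0) (c : WithBot ℝ) :
    (fun _ : Fin 2 => c) ∈ attrSet D := by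
  have hdneg : ∀ i : Fin 2, d i < 0 := by
    intro i
    fin_cases i
    · exact h0
    · exact h1
  refine ⟨0, ?_⟩
  simp only [Function.iterate_zero, id_eq]
  rcases eq_or_ne c ⊥ with hc | hc
  · exact Or.inl (by rw [hc])
  obtain ⟨a, ha⟩ := WithBot.ne_bot_iff_exists.mp hc
  refine Or.inr ⟨fun hb => hc (congrFun hb 0), ⟨0, fun i => ?_⟩⟩
  rw [zero_add, mp_two]
  have key : ∀ j : Fin 2, (↑(D i j) : WithBot ℝ) + c ≤ c := by
    intro j
    by_cases h : i = j
    · rw [hD i j, if_pos h, ← ha, ← WithBot.coe_add, WithBot.coe_le_coe]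
      linarith [hdneg i]
    · rw [hD i j, if_neg h, WithBot.coe_zero, zero_add]
  refine le_antisymm (sup_le (key 0) (key 1)) ?_
  fin_cases i
  · calc c = (↑(D 0 1) : WithBot ℝ) + c := by
          rw [hD 0 1, if_neg (by decide), WithBot.coe_zero, zero_add]
      _ ≤ _ := le_sup_right
  · calc c = (↑(D 1 0) : WithBot ℝ) + c := by
          rw [hD 1 0, if_neg (by decide), WithBot.coe_zero, zero_add]
      _ ≤ _ := le_sup_left

end Neg

end MPAux

/-- Let `D = pdiag(d₁, …, dₙ)` with `d₁ ≤ … ≤ dₙ`, `n ≥ 2`.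
If `n = 2` and `dₙ < 0`, then `attr(D)` consists exactly of the vectors with all
coordinates equal, and `D` is not strongly stable; in all other cases `D` is strongly
stable, i.e. `attr(D)` is everything. -/
theorem attr_pseudoDiagonal {n : ℕ} [NeZero n] (hn : 2 ≤ n)
    (d : Fin n → ℝ) (hmono : Monotone d)
    (D : Fin n → Fin n → ℝ)
    (hD : ∀ i j, D i j = if i = j then d i else 0) :
    ((n = 2 ∧ d ⟨n - 1, by omega⟩ < 0) →
        attrSet D = {x | ∀ i j : Fin n, x i = x j} ∧ attrSet D ≠ Set.univ) ∧
    (¬(n = 2 ∧ d ⟨n - 1, by omega⟩ < 0) → attrSet D = Set.univ) := by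
  constructor
  · rintro ⟨hn2, hdn⟩
    subst hn2
    have h1 : d 1 < 0 := hdn
    have h0 : d 0 < 0 := lt_of_le_of_lt (hmono (by norm_num [Fin.le_def] : (0 : Fin 2) ≤ 1)) h1
    have hc2 : ∀ i : Fin 2, i = 0 ∨ i = 1 := fun i => by omega
    have hattr : attrSet D = {x | ∀ i j : Fin 2, x i = x j} := by
      ext x
      constructor
      · rintro ⟨k, hk⟩
        by_contra hne
        simp only [Set.mem_setOf_eq] at hne
        have hx01 : x 0 ≠ x 1 := by
          intro he
          apply hne
          intro i j
          rcases hc2 i with hi | hi <;> rcases hc2 j with hj | hj <;>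
            simp [hi, hj, he]
        have hiter : ∀ m : ℕ, ((mpMulVec D)^[m] x) 0 ≠ ((mpMulVec D)^[m] x) 1 := by
          intro m
          induction m with
          | zero => exact hx01
          | succ m ih =>
            rw [Function.iterate_succ_apply']
            exact MPAux.neg_preserve hD h0 h1 ih
        exact MPAux.neg_not_eigen hD h0 h1 (hiter k) hk
      · intro hx
        simp only [Set.mem_setOf_eq] at hx
        have hxc : x = fun _ => x 0 := funext fun i => hx i 0
        rw [hxc]
        exact MPAux.const_mem_attr hD h0 h1 (x 0)
    refine ⟨hattr, ?_⟩
    intro huniv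
    have hmem : (fun i : Fin 2 => if i = 0 then (0 : WithBot ℝ) else 1) ∈
        attrSet D := by
      rw [huniv]
      trivial
    rw [hattr] at hmem
    simp only [Set.mem_setOf_eq] at hmem
    have h01 : (0 : WithBot ℝ) ≠ 1 := by
      rw [← WithBot.coe_zero, ← WithBot.coe_one, Ne, WithBot.coe_eq_coe]
      norm_num
    have hx := hmem 0 1
    simp only [if_pos rfl, if_neg (by omega : ¬(1 : Fin 2) = 0)] at hx
    exact h01 hx
  · intro hnot
    apply Set.eq_univ_iff_forall.mpr
    intro x
    by_cases hx : x = fun _ => ⊥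
    · exact ⟨0, Or.inl hx⟩
    obtain ⟨y, hy⟩ := MPAux.step_real hD hx
    have ht : ∀ j, d j ≤ d ⟨n - 1, by omega⟩ := by
      intro j
      refine hmono ?_
      rw [Fin.le_def]
      have := j.isLt
      simp
      omega
    have hcase : 3 ≤ n ∨ 0 ≤ d ⟨n - 1, by omega⟩ := by
      by_cases h2 : n = 2
      · right
        by_contra h
        push_neg at h
        exact hnot ⟨h2, h⟩
      · left
        omega
    obtain ⟨k, l, hk⟩ := MPAux.real_main hn ht hcase y
    refine ⟨k + 1, ?_⟩
    have heq : (mpMulVec D)^[k + 1] x =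
        fun i => ((((MPAux.G d)^[k] y) i : ℝ) : WithBot ℝ) := by
      rw [Function.iterate_add_apply (mpMulVec D) k 1 x, Function.iterate_one, hy]
      exact MPAux.iterate_coe hD y k
    rw [heq]
    exact MPAux.eigen_of_real hD ((MPAux.G d)^[k] y) l hk
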